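/- If a deleted vertex x of a graph has degree 1 (a pendant vertex), then removing x does not decrease the edge expansion restricted to sets avoiding the structure: h(G − x) ≥ h(G), provided G has at least 3 vertices. -/
import Mathlib


open Finset

/-- Number of edges of `G` crossing the cut `(S, Sᶜ)`. -/
def cutEdges {V : Type*} [Fintype V] [DecidableEq V] (G : SimpleGraph V)
    [DecidableRel G.Adj] (S : Finset V) : ℕ :=
  ((S ×ˢ Sᶜ).filter (fun p => G.Adj p.1 p.2)).card

/-- Volume of a vertex set: sum of degrees. -/
def vol {V : Type*} [Fintype V] (G : SimpleGraph V) [DecidableRel G.Adj]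
    (S : Finset V) : ℕ :=
  ∑ x ∈ S, G.degree x

/-- Edge expansion `h(G) = min_{0 < |S| ≤ |V|/2} e(S, S̄)/|S|`. -/
noncomputable def edgeExpansion {V : Type*} [Fintype V] [DecidableEq V]
    (G : SimpleGraph V) [DecidableRel G.Adj] : ℝ :=
  sInf {r : ℝ | ∃ S : Finset V, S.Nonempty ∧ 2 * S.card ≤ Fintype.card V ∧
    r = (cutEdges G S : ℝ) / (S.card : ℝ)}

/-- Conductance (Cheeger constant)
`φ(G) = min_{∅ ≠ S ⊊ V} e(S,S̄) / min(vol S, vol S̄)`. -/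
noncomputable def conductance {V : Type*} [Fintype V] [DecidableEq V]
    (G : SimpleGraph V) [DecidableRel G.Adj] : ℝ :=
  sInf {r : ℝ | ∃ S : Finset V, S.Nonempty ∧ Sᶜ.Nonempty ∧
    r = (cutEdges G S : ℝ) / (min (vol G S) (vol G Sᶜ) : ℝ)}

/-- The cut is symmetric: `e(Sᶜ, S) = e(S, Sᶜ)`. -/
lemma cutEdges_compl {V : Type*} [Fintype V] [DecidableEq V] (G : SimpleGraph V)
    [DecidableRel G.Adj] (S : Finset V) : cutEdges G Sᶜ = cutEdges G S := by
  unfold cutEdges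
  rw [compl_compl]
  apply Finset.card_bij (fun p _ => (p.2, p.1))
  · rintro ⟨a, b⟩ h
    simp only [Finset.mem_filter, Finset.mem_product, Finset.mem_compl] at *
    exact ⟨⟨h.1.2, h.1.1⟩, h.2.symm⟩
  · rintro ⟨a, b⟩ _ ⟨c, d⟩ _ h
    simp only [Prod.mk.injEq] at h
    simp [h.1, h.2]
  · rintro ⟨a, b⟩ h
    refine ⟨(b, a), ?_, rfl⟩
    simp only [Finset.mem_filter, Finset.mem_product, Finset.mem_compl] at *
    exact ⟨⟨h.1.2, h.1.1⟩, h.2.symm⟩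

/-- deleting a pendant vertex (degree-1 vertex) `x` of a
connected graph `G` on `n ≥ 3` vertices does not decrease the edge expansion:
`h(G − x) ≥ h(G)`.  Here `H` is the induced subgraph of `G` on `V ∖ {x}`. -/
theorem stmt_18 {V : Type*} [Fintype V] [DecidableEq V] (G : SimpleGraph V)
    [DecidableRel G.Adj] (hconn : G.Connected) (hn : 3 ≤ Fintype.card V)
    (x : V) (hx : G.degree x = 1)
    (H : SimpleGraph {v : V // v ≠ x}) [DecidableRel H.Adj]
    (hH : ∀ u v : {v : V // v ≠ x}, H.Adj u v ↔ G.Adj u.1 v.1) :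
    edgeExpansion G ≤ edgeExpansion H := by
  classical
  have hcard : Fintype.card {v : V // v ≠ x} = Fintype.card V - 1 := by
    rw [Fintype.card_subtype_compl, Fintype.card_subtype_eq]
  have hbdd : BddBelow {r : ℝ | ∃ S : Finset V, S.Nonempty ∧
      2 * S.card ≤ Fintype.card V ∧ r = (cutEdges G S : ℝ) / (S.card : ℝ)} := by
    refine ⟨0, ?_⟩
    rintro r ⟨S, -, -, rfl⟩
    positivity
  apply le_csInf
  · obtain ⟨a, b, hab⟩ := Fintype.exists_pair_of_one_lt_card
      (by omega : 1 < Fintype.card V)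
    obtain ⟨v, hv⟩ : ∃ v : V, v ≠ x := by
      rcases eq_or_ne a x with rfl | h
      · exact ⟨b, fun hb => hab hb.symm⟩
      · exact ⟨a, h⟩
    refine ⟨_, ⟨{⟨v, hv⟩}, Finset.singleton_nonempty _, ?_, rfl⟩⟩
    rw [hcard, Finset.card_singleton]
    omega
  · rintro r ⟨S, hS, hSsize, rfl⟩
    rw [hcard] at hSsize
    set S' : Finset V := S.image Subtype.val with hS'def
    have hScard : S'.card = S.card := Finset.card_image_of_injective _ Subtype.val_injective
    have hmem : ∀ v : V, v ∈ S' ↔ ∃ h : v ≠ x, ⟨v, h⟩ ∈ S := by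
      intro v
      simp only [hS'def, Finset.mem_image, Subtype.exists]
      constructor
      · rintro ⟨a, ha, haS, rfl⟩
        exact ⟨ha, haS⟩
      · rintro ⟨h, hmemS⟩
        exact ⟨v, h, hmemS, rfl⟩
    have hxS' : x ∉ S' := by
      rw [hmem]
      rintro ⟨h, -⟩
      exact h rfl
    have hSpos : 0 < S.card := hS.card_pos
    suffices h : ∃ T : Finset V, T.Nonempty ∧ 2 * T.card ≤ Fintype.card V ∧
        (cutEdges G T : ℝ) / (T.card : ℝ) ≤ (cutEdges H S : ℝ) / (S.card : ℝ) by
      obtain ⟨T, h1, h2, h3⟩ := h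
      exact le_trans (csInf_le hbdd ⟨T, h1, h2, rfl⟩) h3
    by_cases hadj : ∃ u ∈ S', G.Adj u x
    · -- x's neighbor is inside S'; use insert x S' (or its complement)
      obtain ⟨u₀, hu₀S, hu₀adj⟩ := hadj
      have huniq : ∀ v, G.Adj x v → v = u₀ := by
        intro v hv
        have h1 : v ∈ G.neighborFinset x := by simpa using hv
        have h2 : u₀ ∈ G.neighborFinset x := by simpa using hu₀adj.symm
        have hd : (G.neighborFinset x).card = 1 := by
          rw [G.card_neighborFinset_eq_degree, hx]
        obtain ⟨a, ha⟩ := Finset.card_eq_one.mp hd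
        rw [ha, Finset.mem_singleton] at h1 h2
        rw [h1, h2]
      have hcut : cutEdges H S = cutEdges G (insert x S') := by
        unfold cutEdges
        apply Finset.card_bij (fun p _ => (p.1.1, p.2.1))
        · rintro ⟨⟨a, ha⟩, ⟨b, hb⟩⟩ h
          simp only [Finset.mem_filter, Finset.mem_product, Finset.mem_compl] at *
          refine ⟨⟨?_, ?_⟩, (hH _ _).mp h.2⟩
          · exact Finset.mem_insert_of_mem ((hmem a).mpr ⟨ha, h.1.1⟩)
          · intro hcon
            rcases Finset.mem_insert.mp hcon with h' | h'
            · exact hb h'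
            · exact h.1.2 ((hmem b).mp h').2
        · rintro ⟨⟨a, _⟩, ⟨b, _⟩⟩ _ ⟨⟨c, _⟩, ⟨d, _⟩⟩ _ h
          simp only [Prod.mk.injEq, Subtype.mk.injEq] at h ⊢
          exact h
        · rintro ⟨u, v⟩ h
          simp only [Finset.mem_filter, Finset.mem_product, Finset.mem_compl] at h
          obtain ⟨⟨hu, hv⟩, huv⟩ := h
          have hvx : v ≠ x := by
            rintro rfl
            exact hv (Finset.mem_insert_self _ _)
          have hux : u ≠ x := by
            rintro rfl
            have := huniq v huv
            subst this
            exact hv (Finset.mem_insert_of_mem hu₀S)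
          have huS' : u ∈ S' := by
            rcases Finset.mem_insert.mp hu with h' | h'
            · exact absurd h' hux
            · exact h'
          have hvS' : v ∉ S' := fun h' => hv (Finset.mem_insert_of_mem h')
          refine ⟨(⟨u, hux⟩, ⟨v, hvx⟩), ?_, rfl⟩
          simp only [Finset.mem_filter, Finset.mem_product, Finset.mem_compl]
          refine ⟨⟨((hmem u).mp huS').2, fun h' => hvS' ((hmem v).mpr ⟨hvx, h'⟩)⟩,
            (hH _ _).mpr huv⟩
      have hinscard : (insert x S').card = S.card + 1 := by
        rw [Finset.card_insert_of_notMem hxS', hScard]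
      by_cases hsize : 2 * (S.card + 1) ≤ Fintype.card V
      · refine ⟨insert x S', Finset.insert_nonempty _ _, by rw [hinscard]; omega, ?_⟩
        rw [← hcut, hinscard]
        apply div_le_div_of_nonneg_left (by positivity) (by positivity)
        push_cast
        linarith
      · -- 2*S.card = card V - 1; use the complement
        refine ⟨(insert x S')ᶜ, ?_, ?_, ?_⟩
        · rw [← Finset.card_pos, Finset.card_compl, hinscard]
          omega
        · rw [Finset.card_compl, hinscard]
          omega
        · rw [cutEdges_compl, ← hcut, Finset.card_compl, hinscard]
          have : Fintype.card V - (S.card + 1) = S.card := by omega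
          rw [this]
    · -- x's neighbor is outside S'; use S' itself
      push_neg at hadj
      have hcut : cutEdges H S = cutEdges G S' := by
        unfold cutEdges
        apply Finset.card_bij (fun p _ => (p.1.1, p.2.1))
        · rintro ⟨⟨a, ha⟩, ⟨b, hb⟩⟩ h
          simp only [Finset.mem_filter, Finset.mem_product, Finset.mem_compl] at *
          refine ⟨⟨(hmem a).mpr ⟨ha, h.1.1⟩, fun h' => h.1.2 ((hmem b).mp h').2⟩,
            (hH _ _).mp h.2⟩
        · rintro ⟨⟨a, _⟩, ⟨b, _⟩⟩ _ ⟨⟨c, _⟩, ⟨d, _⟩⟩ _ h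
          simp only [Prod.mk.injEq, Subtype.mk.injEq] at h ⊢
          exact h
        · rintro ⟨u, v⟩ h
          simp only [Finset.mem_filter, Finset.mem_product, Finset.mem_compl] at h
          obtain ⟨⟨hu, hv⟩, huv⟩ := h
          have hux : u ≠ x := fun h' => hxS' (h' ▸ hu)
          have hvx : v ≠ x := by
            rintro rfl
            exact hadj u hu huv
          refine ⟨(⟨u, hux⟩, ⟨v, hvx⟩), ?_, rfl⟩
          simp only [Finset.mem_filter, Finset.mem_product, Finset.mem_compl]
          exact ⟨⟨((hmem u).mp hu).2, fun h' => hv ((hmem v).mpr ⟨hvx, h'⟩)⟩,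
            (hH _ _).mpr huv⟩
      refine ⟨S', hS.image _, by rw [hScard]; omega, ?_⟩
      rw [← hcut, hScard]
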